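/- arXiv:math/0309127 — 3 statements merged into one kernel-verified Lean document; each statement's English description precedes it below -/
import Mathlib

section
/- The family of open sets {U_A : A trace class} covers the space of Fredholm operators of index zero, i.e., for every index-zero Fredholm operator T there is a trace class operator A with T + A invertible. -/
open Module

variable {H : Type*} [NormedAddCommGroup H] [InnerProductSpace ℂ H] [CompleteSpace H]

/-- A bounded operator is Fredholm if its kernel is finite dimensional and its range is
closed with finite dimensional cokernel. -/
def IsFredholm (T : H →L[ℂ] H) : Prop :=
  FiniteDimensional ℂ (LinearMap.ker (T : H →ₗ[ℂ] H)) ∧ IsClosed (LinearMap.range (T : H →ₗ[ℂ] H) : Set H) ∧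
    FiniteDimensional ℂ (H ⧸ LinearMap.range (T : H →ₗ[ℂ] H))

/-- A Fredholm operator has index zero if `dim Ker T = dim Coker T`. -/
def HasIndexZero (T : H →L[ℂ] H) : Prop :=
  Module.finrank ℂ (LinearMap.ker (T : H →ₗ[ℂ] H)) = Module.finrank ℂ (H ⧸ LinearMap.range (T : H →ₗ[ℂ] H))

/-- Trace class operators, characterized through singular value decompositions:
`T` is trace class iff `T = ∑ cₙ ⟨eₙ, ·⟩ fₙ` with `‖eₙ‖, ‖fₙ‖ ≤ 1` and `∑ ‖cₙ‖ < ∞`. -/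
def IsTraceClass (T : H →L[ℂ] H) : Prop :=
  ∃ (c : ℕ → ℂ) (e f : ℕ → H), Summable (fun n => ‖c n‖) ∧
    (∀ n, ‖e n‖ ≤ 1) ∧ (∀ n, ‖f n‖ ≤ 1) ∧
    ∀ x, T x = ∑' n, c n • (inner ℂ (e n) x : ℂ) • f n

/-- The family `{U_A : A trace class}` covers the space of index-zero Fredholm operators:
for every index-zero Fredholm operator `T` there is a trace class operator `A` with `T + A`
invertible. -/
theorem exists_traceClass_add_isUnit
    (T : H →L[ℂ] H) (hT : IsFredholm T) (hT0 : HasIndexZero T) :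
    ∃ A : H →L[ℂ] H, IsTraceClass A ∧ IsUnit (T + A) := by
  obtain ⟨hker, hclosed, hcoker⟩ := hT
  set K := LinearMap.ker (T : H →ₗ[ℂ] H) with hK
  set R := LinearMap.range (T : H →ₗ[ℂ] H) with hR
  haveI : CompleteSpace R := hclosed.completeSpace_coe
  have equot : (H ⧸ R) ≃ₗ[ℂ] Rᗮ :=
    Submodule.quotientEquivOfIsCompl R Rᗮ Submodule.isCompl_orthogonal_of_hasOrthogonalProjection
  haveI : FiniteDimensional ℂ Rᗮ := equot.finiteDimensional
  haveI : FiniteDimensional ℂ K := hker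
  have hrank : finrank ℂ Rᗮ = finrank ℂ K := equot.finrank_eq.symm.trans hT0.symm
  set n := finrank ℂ K with hn
  let e : OrthonormalBasis (Fin n) ℂ K := stdOrthonormalBasis ℂ K
  let f : OrthonormalBasis (Fin n) ℂ Rᗮ := (stdOrthonormalBasis ℂ Rᗮ).reindex (finCongr hrank)
  set A : H →L[ℂ] H := ∑ i : Fin n, (innerSL ℂ ((e i : H))).smulRight ((f i : H)) with hA
  have hAx : ∀ x, A x = ∑ i : Fin n, (inner ℂ ((e i : H)) x : ℂ) • (f i : H) := by
    intro x
    simp [hA, ContinuousLinearMap.sum_apply]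
  have hfH : Orthonormal ℂ (fun i => (f i : H)) := by
    have := f.orthonormal
    rw [orthonormal_iff_ite] at this ⊢
    intro i j
    simpa [Submodule.coe_inner] using this i j
  have heH : Orthonormal ℂ (fun i => (e i : H)) := by
    have := e.orthonormal
    rw [orthonormal_iff_ite] at this ⊢
    intro i j
    simpa [Submodule.coe_inner] using this i j
  refine ⟨A, ?_, ?_⟩
  · -- trace class
    refine ⟨fun m => if m < n then 1 else 0,
      fun m => if h : m < n then (e ⟨m, h⟩ : H) else 0,
      fun m => if h : m < n then (f ⟨m, h⟩ : H) else 0,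
      ?_, ?_, ?_, ?_⟩
    · apply summable_of_ne_finset_zero (s := Finset.range n)
      intro m hm
      simp [Finset.mem_range] at hm
      simp [hm]
    · intro m
      by_cases h : m < n <;> simp [h]
      exact le_of_eq (heH.1 _)
    · intro m
      by_cases h : m < n <;> simp [h]
      exact le_of_eq (hfH.1 _)
    · intro x
      rw [hAx]
      rw [tsum_eq_sum (s := Finset.range n) (by
        intro m hm
        simp [Finset.mem_range] at hm
        simp [hm])]
      rw [Finset.sum_range fun m => _]
      congr 1
      ext i
      simp [i.isLt]
  · -- invertible
    have hAmem : ∀ x, A x ∈ Rᗮ := by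
      intro x
      rw [hAx]
      exact Submodule.sum_mem _ fun i _ => Submodule.smul_mem _ _ (f i).2
    have hTe : ∀ i : Fin n, T ((e i : H)) = 0 := fun i => (e i).2
    have hinj : LinearMap.ker ((T + A : H →L[ℂ] H) : H →ₗ[ℂ] H) = ⊥ := by
      rw [Submodule.eq_bot_iff]
      intro x hx
      have hx' : T x + A x = 0 := hx
      have h1 : T x = -A x := eq_neg_of_add_eq_zero_left hx'
      have hTxO : T x ∈ Rᗮ := by
        rw [h1]; exact Submodule.neg_mem _ (hAmem x)
      have hTx0 : T x = 0 := by
        have := (Submodule.mem_orthogonal R (T x)).1 hTxO (T x) (LinearMap.mem_range_self (T : H →ₗ[ℂ] H) x)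
        exact inner_self_eq_zero.1 this
      have hAx0 : A x = 0 := by
        have : A x = -T x := (neg_eq_of_add_eq_zero_right hx').symm
        rw [this, hTx0, neg_zero]
      have hxK : x ∈ K := hTx0
      have hcoef : ∀ j : Fin n, (inner ℂ ((e j : H)) x : ℂ) = 0 := by
        intro j
        have h0 : (inner ℂ ((f j : H)) (A x) : ℂ) = 0 := by rw [hAx0]; simp
        rw [hAx] at h0
        rw [inner_sum] at h0
        simp_rw [inner_smul_right] at h0
        rw [orthonormal_iff_ite] at hfH
        simpa [hfH j, Finset.sum_ite_eq, mul_comm] using h0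
      have : (⟨x, hxK⟩ : K) = 0 := by
        have := e.sum_repr' (⟨x, hxK⟩ : K)
        rw [← this]
        refine Finset.sum_eq_zero fun i _ => ?_
        have : (inner ℂ (e i) (⟨x, hxK⟩ : K) : ℂ) = 0 := by
          rw [Submodule.coe_inner]; exact hcoef i
        rw [this, zero_smul]
      simpa using congrArg Subtype.val this
    have hsurj : LinearMap.range ((T + A : H →L[ℂ] H) : H →ₗ[ℂ] H) = ⊤ := by
      rw [LinearMap.range_eq_top]
      intro y
      obtain ⟨z, hz⟩ := (Submodule.orthogonalProjectionOnto R y).2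
      set y2 := y - (Submodule.orthogonalProjectionOnto R y : H) with hy2def
      have hy2 : y2 ∈ Rᗮ := Submodule.sub_starProjection_mem_orthogonal (K := R) y
      set w := (z - (Submodule.orthogonalProjectionOnto K z : H)) + ∑ i : Fin n, (inner ℂ ((f i : H)) y2 : ℂ) • (e i : H) with hw
      refine ⟨w, ?_⟩
      have hTw : T w = (Submodule.orthogonalProjectionOnto R y : H) := by
        rw [hw]
        rw [map_add, map_sub, map_sum]
        simp_rw [map_smul]
        have hproj : T ((Submodule.orthogonalProjectionOnto K z : H)) = 0 := (Submodule.orthogonalProjectionOnto K z).2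
        simpa [hproj, hTe, -Submodule.coe_orthogonalProjectionOnto_apply] using hz
      have hAw : A w = y2 := by
        rw [hAx]
        have hcoef : ∀ i : Fin n, (inner ℂ ((e i : H)) w : ℂ) = inner ℂ ((f i : H)) y2 := by
          intro i
          rw [hw, inner_add_right]
          have h1 : (inner ℂ ((e i : H)) (z - (Submodule.orthogonalProjectionOnto K z : H)) : ℂ) = 0 :=
            (Submodule.mem_orthogonal K _).1 (Submodule.sub_starProjection_mem_orthogonal (K := K) z) _ (e i).2
          rw [h1, zero_add, inner_sum]
          simp_rw [inner_smul_right]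
          rw [orthonormal_iff_ite] at heH
          simp [heH i, Finset.sum_ite_eq, mul_comm]
        simp_rw [hcoef]
        have h := congrArg (Subtype.val) (f.sum_repr' (⟨y2, hy2⟩ : Rᗮ))
        simpa [Submodule.coe_inner] using h
      show T w + A w = y
      rw [hTw, hAw, hy2def]
      abel
    exact ⟨(ContinuousLinearEquiv.ofBijective (T + A) hinj hsurj).toUnit,
      ContinuousLinearEquiv.coe_ofBijective _ _ _⟩
end

section
/- Let T be a Fredholm operator of index zero and L, L' : Ker(T) → H two linear maps such that ρ_T∘L and ρ_T∘L' are isomorphisms onto Coker(T). Then (T + L∘π_T)^{-1}∘(T + L'∘π_T) − Id is a finite rank operator, and det_F((T + L∘π_T)^{-1}∘(T + L'∘π_T)) = det(a_{ij}), where (a_{ij}) is the matrix of the map (ρ_T∘L)^{-1}∘(ρ_T∘L') : Ker(T) → Ker(T) in any basis of Ker(T). -/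
open Module

variable {H : Type*} [NormedAddCommGroup H] [InnerProductSpace ℂ H] [CompleteSpace H]

/-- Determinant commutation (Weinstein–Aronszajn) for linear maps between two
finite dimensional spaces. -/
lemma det_one_add_comm' {E V : Type*} [AddCommGroup E] [Module ℂ E] [AddCommGroup V] [Module ℂ V]
    [FiniteDimensional ℂ E] [FiniteDimensional ℂ V] (A : E →ₗ[ℂ] V) (B : V →ₗ[ℂ] E) :
    LinearMap.det (LinearMap.id + A ∘ₗ B) = LinearMap.det (LinearMap.id + B ∘ₗ A) := by
  classical
  let bE := Module.finBasis ℂ E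
  let bV := Module.finBasis ℂ V
  rw [← LinearMap.det_toMatrix bV, ← LinearMap.det_toMatrix bE, map_add, map_add,
    LinearMap.toMatrix_id, LinearMap.toMatrix_id, LinearMap.toMatrix_comp bV bE bV,
    LinearMap.toMatrix_comp bE bV bE, Matrix.det_one_add_mul_comm]


/-- Let `T` be a Fredholm operator of index zero and `L, L' : Ker(T) → H` two linear maps such
that `ρ_T∘L` and `ρ_T∘L'` are isomorphisms onto `Coker(T)`.  Then
`(T + L∘π_T)⁻¹∘(T + L'∘π_T) − Id` is a finite rank operator, and
`det_F((T + L∘π_T)⁻¹∘(T + L'∘π_T)) = det (a_{ij})`, where `(a_{ij})` is the matrix of the map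
`(ρ_T∘L)⁻¹∘(ρ_T∘L') : Ker(T) → Ker(T)` (its determinant being `LinearMap.det` of that
endomorphism).  Here `det_F` is the Fredholm determinant, which on `Id + (finite rank)`
operators agrees with the determinant of the induced map on any finite dimensional invariant
subspace containing the range. -/
theorem detF_inverse_mul_eq_det
    (detF : (H →L[ℂ] H) → ℂ)
    (hdet : ∀ (K : H →L[ℂ] H) (V : Submodule ℂ H), FiniteDimensional ℂ V →
      (∀ x, K x ∈ V) → ∀ hV : ∀ x ∈ V, K x ∈ V,
      detF (1 + K) = LinearMap.det (LinearMap.id + (K : H →ₗ[ℂ] H).restrict hV))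
    (T : H →L[ℂ] H) (hT : IsFredholm T) (hT0 : HasIndexZero T)
    [FiniteDimensional ℂ (LinearMap.ker (T : H →ₗ[ℂ] H))] [CompleteSpace (LinearMap.ker (T : H →ₗ[ℂ] H))]
    (L L' : LinearMap.ker (T : H →ₗ[ℂ] H) →ₗ[ℂ] H)
    (hL : Function.Bijective ((LinearMap.range (T : H →ₗ[ℂ] H)).mkQ.comp L))
    (hL' : Function.Bijective ((LinearMap.range (T : H →ₗ[ℂ] H)).mkQ.comp L')) :
    FiniteDimensional ℂ (LinearMap.range
      ((Ring.inverse (T + (LinearMap.toContinuousLinearMap L).comp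
          (LinearMap.ker (T : H →ₗ[ℂ] H)).orthogonalProjectionOnto) *
        (T + (LinearMap.toContinuousLinearMap L').comp
          (LinearMap.ker (T : H →ₗ[ℂ] H)).orthogonalProjectionOnto) - 1 : H →L[ℂ] H) : H →ₗ[ℂ] H)) ∧
    detF (Ring.inverse (T + (LinearMap.toContinuousLinearMap L).comp
          (LinearMap.ker (T : H →ₗ[ℂ] H)).orthogonalProjectionOnto) *
        (T + (LinearMap.toContinuousLinearMap L').comp
          (LinearMap.ker (T : H →ₗ[ℂ] H)).orthogonalProjectionOnto)) =
      LinearMap.det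
        (((LinearEquiv.ofBijective ((LinearMap.range (T : H →ₗ[ℂ] H)).mkQ.comp L) hL).symm :
            (H ⧸ LinearMap.range (T : H →ₗ[ℂ] H)) →ₗ[ℂ] LinearMap.ker (T : H →ₗ[ℂ] H)) ∘ₗ
          ((LinearMap.range (T : H →ₗ[ℂ] H)).mkQ.comp L')) := by
  classical
  set P : H →L[ℂ] (LinearMap.ker (T : H →ₗ[ℂ] H)) := (LinearMap.ker (T : H →ₗ[ℂ] H)).orthogonalProjectionOnto with hPdef
  set S : H →L[ℂ] H := T + (LinearMap.toContinuousLinearMap L).comp P with hSdef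
  set S' : H →L[ℂ] H := T + (LinearMap.toContinuousLinearMap L').comp P with hS'def
  have hPk : ∀ k : LinearMap.ker (T : H →ₗ[ℂ] H), P (k : H) = k :=
    fun k => Submodule.orthogonalProjectionOnto_mem_subspace_eq_self k
  have hTk : ∀ k : LinearMap.ker (T : H →ₗ[ℂ] H), T (k : H) = 0 := fun k => LinearMap.mem_ker.mp k.2
  have hSx : ∀ x, S x = T x + L (P x) := fun x => rfl
  have hS'x : ∀ x, S' x = T x + L' (P x) := fun x => rfl
  have hρT : ∀ x, (LinearMap.range (T : H →ₗ[ℂ] H)).mkQ (T x) = 0 := by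
    intro x
    rw [Submodule.mkQ_apply, Submodule.Quotient.mk_eq_zero]
    exact ⟨x, rfl⟩
  -- `S` is bijective
  have hSk : ∀ k : LinearMap.ker (T : H →ₗ[ℂ] H), S (k : H) = L k := by
    intro k; rw [hSx, hTk, hPk, zero_add]
  have hSinj : Function.Injective S := by
    intro x y hxy
    have h0 : S (x - y) = 0 := by rw [map_sub, hxy, sub_self]
    have h1 : (LinearMap.range (T : H →ₗ[ℂ] H)).mkQ (L (P (x - y))) = 0 := by
      have h2 : (LinearMap.range (T : H →ₗ[ℂ] H)).mkQ (S (x - y)) = 0 := by rw [h0, map_zero]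
      rwa [hSx, map_add, hρT, zero_add] at h2
    have h3 : P (x - y) = 0 := by
      apply hL.injective
      show (LinearMap.range (T : H →ₗ[ℂ] H)).mkQ (L (P (x - y))) = (LinearMap.range (T : H →ₗ[ℂ] H)).mkQ (L 0)
      rw [h1, map_zero, map_zero]
    have h4 : T (x - y) = 0 := by
      have h0' := h0
      rwa [hSx, h3, map_zero, add_zero] at h0'
    have h5 : x - y ∈ LinearMap.ker (T : H →ₗ[ℂ] H) := h4
    have h6 : P (x - y) = ⟨x - y, h5⟩ := hPk ⟨x - y, h5⟩
    have h7 : (⟨x - y, h5⟩ : LinearMap.ker (T : H →ₗ[ℂ] H)) = 0 := by rw [← h6, h3]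
    have h8 : x - y = 0 := congrArg Subtype.val h7
    exact sub_eq_zero.mp h8
  have hSsurj : Function.Surjective S := by
    intro y
    obtain ⟨k, hk⟩ := hL.surjective ((LinearMap.range (T : H →ₗ[ℂ] H)).mkQ y)
    have hk' : (Submodule.Quotient.mk (L k) : H ⧸ LinearMap.range (T : H →ₗ[ℂ] H))
        = Submodule.Quotient.mk y := hk
    have hmem : y - L k ∈ LinearMap.range (T : H →ₗ[ℂ] H) := (Submodule.Quotient.eq _).mp hk'.symm
    obtain ⟨z, hz⟩ := hmem
    refine ⟨z - ((P z : LinearMap.ker (T : H →ₗ[ℂ] H)) : H) + (k : H), ?_⟩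
    have hT1 : T (z - ((P z : LinearMap.ker (T : H →ₗ[ℂ] H)) : H) + (k : H)) = T z := by
      rw [map_add, map_sub, hTk (P z), hTk k, sub_zero, add_zero]
    have hP1 : P (z - ((P z : LinearMap.ker (T : H →ₗ[ℂ] H)) : H) + (k : H)) = k := by
      rw [map_add, map_sub, hPk (P z), hPk k, sub_self, zero_add]
    rw [hSx, hT1, hP1, show T z = y - L k from hz]
    abel
  -- `S` is a unit
  have hunit : IsUnit S := by
    let eS : H ≃L[ℂ] H := ContinuousLinearEquiv.ofBijective S
      (LinearMap.ker_eq_bot.mpr hSinj) (LinearMap.range_eq_top.mpr hSsurj)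
    exact ⟨eS.toUnit, ContinuousLinearEquiv.coe_ofBijective _ _ _⟩
  have hSinvS : ∀ x, Ring.inverse S (S x) = x := by
    intro x
    have h := Ring.inverse_mul_cancel S hunit
    calc Ring.inverse S (S x) = (Ring.inverse S * S) x := rfl
      _ = x := by rw [h]; rfl
  have hSSinv : ∀ x, S (Ring.inverse S x) = x := by
    intro x
    have h := Ring.mul_inverse_cancel S hunit
    calc S (Ring.inverse S x) = (S * Ring.inverse S) x := rfl
      _ = x := by rw [h]; rfl
  set K : H →L[ℂ] H := Ring.inverse S * S' - 1 with hKdef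
  set A : (LinearMap.ker (T : H →ₗ[ℂ] H)) →ₗ[ℂ] H :=
    ((Ring.inverse S : H →L[ℂ] H) : H →ₗ[ℂ] H) ∘ₗ (L' - L) with hAdef
  have hAk : ∀ k : LinearMap.ker (T : H →ₗ[ℂ] H), A k = Ring.inverse S (L' k - L k) := fun k => rfl
  have hKA : ∀ x, K x = A (P x) := by
    intro x
    have h6 : S' x - S x = L' (P x) - L (P x) := by rw [hS'x, hSx]; abel
    calc K x = Ring.inverse S (S' x) - x := rfl
      _ = Ring.inverse S (S' x) - Ring.inverse S (S x) := by rw [hSinvS]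
      _ = Ring.inverse S (S' x - S x) := (map_sub _ _ _).symm
      _ = Ring.inverse S (L' (P x) - L (P x)) := by rw [h6]
      _ = A (P x) := (hAk _).symm
  -- Part 1: finite rank
  have hrange_le : LinearMap.range (K : H →ₗ[ℂ] H) ≤ LinearMap.range A := by
    rintro _ ⟨x, rfl⟩
    exact ⟨P x, (hKA x).symm⟩
  have hVfd : FiniteDimensional ℂ (LinearMap.range (K : H →ₗ[ℂ] H)) :=
    Submodule.finiteDimensional_of_le hrange_le
  refine ⟨hVfd, ?_⟩
  -- Part 2
  set V : Submodule ℂ H := LinearMap.range (K : H →ₗ[ℂ] H) with hVdef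
  have hmemV : ∀ x, K x ∈ V := fun x => LinearMap.mem_range_self _ x
  have hVinv : ∀ x ∈ V, K x ∈ V := fun x _ => hmemV x
  have h1 := hdet K V hVfd hmemV hVinv
  have h2 : (1 : H →L[ℂ] H) + K = Ring.inverse S * S' := by rw [hKdef]; abel
  rw [h2] at h1
  rw [h1]
  -- now equate the two determinants
  have hAmem : ∀ k : LinearMap.ker (T : H →ₗ[ℂ] H), A k ∈ V := by
    intro k
    have hkk : A k = K (k : H) := by rw [hKA, hPk]
    rw [hkk]; exact hmemV _
  set Ahat : (LinearMap.ker (T : H →ₗ[ℂ] H)) →ₗ[ℂ] V := A.codRestrict V hAmem with hAhat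
  set Bhat : V →ₗ[ℂ] (LinearMap.ker (T : H →ₗ[ℂ] H)) :=
    ((P : H →ₗ[ℂ] (LinearMap.ker (T : H →ₗ[ℂ] H)))).comp V.subtype with hBhat
  have hsplit : (K : H →ₗ[ℂ] H).restrict hVinv = Ahat ∘ₗ Bhat := by
    apply LinearMap.ext; intro v
    apply Subtype.ext
    show K (v : H) = A (P (v : H))
    exact hKA _
  rw [hsplit, det_one_add_comm' Ahat Bhat]
  congr 1
  -- `id + Bhat ∘ Ahat = (ρ∘L)⁻¹ ∘ (ρ∘L')`
  apply LinearMap.ext; intro k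
  have e2 : A k = Ring.inverse S (L' k) - (k : H) := by
    rw [hAk, map_sub]
    congr 1
    rw [← hSk k, hSinvS]
  have hBA : Bhat (Ahat k) = P (Ring.inverse S (L' k)) - k := by
    have e1 : Bhat (Ahat k) = P (A k) := rfl
    rw [e1, e2, map_sub, hPk]
  have hLHS : (LinearMap.id + Bhat ∘ₗ Ahat :
      LinearMap.ker (T : H →ₗ[ℂ] H) →ₗ[ℂ] LinearMap.ker (T : H →ₗ[ℂ] H)) k = P (Ring.inverse S (L' k)) := by
    rw [LinearMap.add_apply, LinearMap.id_apply, LinearMap.comp_apply, hBA]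
    abel
  rw [hLHS]
  set y : H := Ring.inverse S (L' k) with hy'
  have hy : S y = L' k := hSSinv _
  have hquot : (LinearMap.range (T : H →ₗ[ℂ] H)).mkQ (L (P y)) = (LinearMap.range (T : H →ₗ[ℂ] H)).mkQ (L' k) := by
    rw [Submodule.mkQ_apply, Submodule.mkQ_apply, Submodule.Quotient.eq]
    refine ⟨-y, ?_⟩
    have hTy : T y + L (P y) = L' k := by rw [← hSx, hy]
    have hTy' : T y = L' k - L (P y) := by rw [← hTy]; abel
    rw [map_neg, show (T : H →ₗ[ℂ] H) y = L' k - L (P y) from hTy']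
    abel
  have hRHS : ((((LinearEquiv.ofBijective ((LinearMap.range (T : H →ₗ[ℂ] H)).mkQ.comp L) hL).symm :
        (H ⧸ LinearMap.range (T : H →ₗ[ℂ] H)) →ₗ[ℂ] LinearMap.ker (T : H →ₗ[ℂ] H)) ∘ₗ
        ((LinearMap.range (T : H →ₗ[ℂ] H)).mkQ.comp L')) k)
      = (LinearEquiv.ofBijective ((LinearMap.range (T : H →ₗ[ℂ] H)).mkQ.comp L) hL).symm
          ((LinearMap.range (T : H →ₗ[ℂ] H)).mkQ (L' k)) := rfl
  rw [hRHS, LinearEquiv.eq_symm_apply, LinearEquiv.ofBijective_apply]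
  show (LinearMap.range (T : H →ₗ[ℂ] H)).mkQ (L (P y)) = (LinearMap.range (T : H →ₗ[ℂ] H)).mkQ (L' k)
  exact hquot
end

section
/- For any compact Hausdorff space X and continuous map f : X → F̂_*, the pullback f*(L_Q) of the Quillen determinant line bundle is trivial, where F̂_* is the nontrivial connected component of the space of selfadjoint Fredholm operators. -/
open Module Bundle TensorProduct

variable {H : Type*} [NormedAddCommGroup H] [InnerProductSpace ℂ H] [CompleteSpace H]

/-- A (complex) line bundle is trivial if it admits a global linear trivialization. -/
def IsTrivialLineBundle {B : Type*} [TopologicalSpace B] (E : B → Type*)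
    [TopologicalSpace (TotalSpace ℂ E)] [∀ b, AddCommMonoid (E b)] [∀ b, Module ℂ (E b)] :
    Prop :=
  ∃ e : Trivialization ℂ (Bundle.TotalSpace.proj (F := ℂ) (E := E)),
    e.baseSet = Set.univ ∧ e.IsLinear ℂ

/-- An isomorphism of complex line bundles: a fiberwise linear homeomorphism of total
spaces. -/
def LineBundleIso {B : Type*} [TopologicalSpace B] (E F' : B → Type*)
    [TopologicalSpace (TotalSpace ℂ E)] [TopologicalSpace (TotalSpace ℂ F')]
    [∀ b, AddCommMonoid (E b)] [∀ b, Module ℂ (E b)]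
    [∀ b, AddCommMonoid (F' b)] [∀ b, Module ℂ (F' b)] : Prop :=
  ∃ φ : ∀ b, E b ≃ₗ[ℂ] F' b,
    Continuous (fun p : TotalSpace ℂ E => (⟨p.proj, φ p.proj p.snd⟩ : TotalSpace ℂ F')) ∧
    Continuous (fun p : TotalSpace ℂ F' => (⟨p.proj, (φ p.proj).symm p.snd⟩ : TotalSpace ℂ E))

/-- The fiber of the Quillen determinant line bundle at a Fredholm operator `T` of index zero:
`Λ^top Ker(T)* ⊗ Λ^top Coker(T)`. -/
abbrev QuillenFiber (T : {T : H →L[ℂ] H // IsFredholm T ∧ HasIndexZero T}) : Type _ :=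
  (⋀[ℂ]^(Module.finrank ℂ (LinearMap.ker (T.1 : H →ₗ[ℂ] H)))
      (Module.Dual ℂ (LinearMap.ker (T.1 : H →ₗ[ℂ] H)))) ⊗[ℂ]
    (⋀[ℂ]^(Module.finrank ℂ (H ⧸ LinearMap.range (T.1 : H →ₗ[ℂ] H)))
      (H ⧸ LinearMap.range (T.1 : H →ₗ[ℂ] H)))

/-- Membership in `F̂_*`, the nontrivial component of the space of selfadjoint Fredholm
operators: a selfadjoint Fredholm operator whose essential spectrum meets both `(0,∞)` and
`(−∞,0)` (by Weyl's criterion, `c` is in the essential spectrum iff `T − c·Id` is not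
Fredholm). -/
def MemFStar (T : H →L[ℂ] H) : Prop :=
  IsSelfAdjoint T ∧ IsFredholm T ∧
    (∃ c : ℝ, 0 < c ∧ ¬ IsFredholm (T - (c : ℂ) • (1 : H →L[ℂ] H))) ∧
    (∃ c : ℝ, c < 0 ∧ ¬ IsFredholm (T - (c : ℂ) • (1 : H →L[ℂ] H)))

set_option linter.unusedSectionVars false
set_option maxHeartbeats 1000000

/-- straight-line-with-bump homotopy of operators -/
noncomputable def Qop (T : H →L[ℂ] H) (t : ℝ) : H →L[ℂ] H :=
  (1 - (t : ℂ)) • T + (((t : ℂ) + Complex.I * t * (1 - t))) • 1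

theorem Qop_zero (T : H →L[ℂ] H) : Qop T 0 = T := by
  simp [Qop]

theorem Qop_one (T : H →L[ℂ] H) : Qop T 1 = 1 := by
  simp [Qop]

theorem isFredholm_hasIndexZero_of_isUnit {T : H →L[ℂ] H} (h : IsUnit T) :
    IsFredholm T ∧ HasIndexZero T := by
  have hker : LinearMap.ker (T : H →ₗ[ℂ] H) = ⊥ := by
    rw [LinearMap.ker_eq_bot']
    intro x hx
    calc x = ((↑h.unit⁻¹ * ↑h.unit : H →L[ℂ] H)) x := by
            rw [h.unit.inv_mul]; rfl
    _ = (↑h.unit⁻¹ : H →L[ℂ] H) (T x) := by rw [ContinuousLinearMap.mul_apply]; rfl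
    _ = 0 := by rw [show T x = 0 from hx]; simp
  have hrange : LinearMap.range (T : H →ₗ[ℂ] H) = ⊤ := by
    rw [LinearMap.range_eq_top]
    intro y
    refine ⟨(↑h.unit⁻¹ : H →L[ℂ] H) y, ?_⟩
    calc T ((↑h.unit⁻¹ : H →L[ℂ] H) y) = ((↑h.unit * ↑h.unit⁻¹ : H →L[ℂ] H)) y := by
          rw [ContinuousLinearMap.mul_apply]; rfl
    _ = y := by rw [h.unit.mul_inv]; rfl
  have hq : Subsingleton (H ⧸ LinearMap.range (T : H →ₗ[ℂ] H)) :=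
    Submodule.Quotient.subsingleton_iff.2 hrange
  have h1 : FiniteDimensional ℂ (LinearMap.ker (T : H →ₗ[ℂ] H)) := by rw [hker]; infer_instance
  have h2 : IsClosed (LinearMap.range (T : H →ₗ[ℂ] H) : Set H) := by rw [hrange]; simp
  have h3 : FiniteDimensional ℂ (H ⧸ LinearMap.range (T : H →ₗ[ℂ] H)) := by
    haveI := hq; infer_instance
  refine ⟨⟨h1, h2, h3⟩, ?_⟩
  unfold HasIndexZero
  rw [hker, finrank_bot, finrank_zero_of_subsingleton]

theorem isSelfAdjoint_smul_real {T : H →L[ℂ] H} (hT : IsSelfAdjoint T) (c : ℝ) :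
    IsSelfAdjoint ((c : ℂ) • T) :=
  IsSelfAdjoint.smul (by simp [IsSelfAdjoint, Complex.conj_ofReal]) hT

theorem isUnit_sa_add_I_smul {S : H →L[ℂ] H} (hS : IsSelfAdjoint S) {β : ℝ} (hβ : β ≠ 0) :
    IsUnit (S + (Complex.I * β) • 1) := by
  have h1 : (-(Complex.I * β)) ∉ spectrum ℂ S := by
    intro hmem
    have h2 := hS.im_eq_zero_of_mem_spectrum hmem
    simp at h2
    exact hβ h2
  have h2 := spectrum.notMem_iff.mp h1
  have h3 : (algebraMap ℂ (H →L[ℂ] H)) (-(Complex.I * β)) - S = -(S + (Complex.I * (β:ℝ)) • 1) := by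
    rw [Algebra.algebraMap_eq_smul_one]
    module
  rw [h3] at h2
  simpa using h2.neg

theorem isUnit_Qop {T : H →L[ℂ] H} (hT : IsSelfAdjoint T) {t : ℝ} (h0 : t ≠ 0) (h1 : t ≠ 1) :
    IsUnit (Qop T t) := by
  have hβ : t * (1 - t) ≠ 0 := mul_ne_zero h0 (sub_ne_zero.2 (Ne.symm h1))
  have hS : IsSelfAdjoint (((1 - t : ℝ) : ℂ) • T + ((t : ℝ) : ℂ) • 1) :=
    (isSelfAdjoint_smul_real hT (1 - t)).add (isSelfAdjoint_smul_real (IsSelfAdjoint.one _) t)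
  have heq : Qop T t = (((1 - t : ℝ) : ℂ) • T + ((t : ℝ) : ℂ) • 1)
      + (Complex.I * ((t * (1 - t) : ℝ) : ℂ)) • 1 := by
    unfold Qop
    push_cast
    module
  rw [heq]
  exact isUnit_sa_add_I_smul hS hβ

section BundleAux

variable {B : Type*} [TopologicalSpace B] {X : Type*} [TopologicalSpace X]

/-- A nowhere vanishing continuous section of `E` along the map `q`. -/
def NVSect (E : B → Type*) [TopologicalSpace (TotalSpace ℂ E)] [∀ b, Zero (E b)]
    (q : X → B) : Prop :=
  ∃ v : ∀ x, E (q x), (Continuous fun x => (⟨q x, v x⟩ : TotalSpace ℂ E)) ∧ ∀ x, v x ≠ 0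

theorem TotalSpace.mk_cast'' {E : B → Type*} {b b' : B} (h : b = b') (w : E b) :
    (⟨b', cast (congrArg E h) w⟩ : TotalSpace ℂ E) = ⟨b, w⟩ := by subst h; rfl

theorem cast_ne_zero'' {E : B → Type*} [∀ b, Zero (E b)] {b b' : B} (h : b = b')
    {w : E b} : cast (congrArg E h) w ≠ 0 ↔ w ≠ 0 := by subst h; exact Iff.rfl

variable {E : B → Type*} [TopologicalSpace (TotalSpace ℂ E)] [∀ b, AddCommGroup (E b)]
  [∀ b, Module ℂ (E b)] [∀ b, TopologicalSpace (E b)]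

theorem NVSect.congr {q q' : X → B} (h : NVSect E q) (hq : ∀ x, q x = q' x) : NVSect E q' := by
  obtain ⟨v, hc, hnz⟩ := h
  refine ⟨fun x => cast (congrArg E (hq x)) (v x), ?_,
    fun x => (cast_ne_zero'' (hq x)).2 (hnz x)⟩
  have heq : (fun x => (⟨q' x, cast (congrArg E (hq x)) (v x)⟩ : TotalSpace ℂ E))
      = fun x => (⟨q x, v x⟩ : TotalSpace ℂ E) :=
    funext fun x => TotalSpace.mk_cast'' (hq x) (v x)
  rw [heq]; exact hc

theorem NVSect.step {Q : X × ℝ → B} {a b : X → ℝ} {U C : Set X}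
    (hQ : Continuous Q) (ha : Continuous a) (hb : Continuous b)
    (hUo : IsOpen U) (hCc : IsClosed C) (hCU : C ⊆ U)
    (hab : ∀ x, x ∉ C → a x = b x)
    (e : Trivialization ℂ (Bundle.TotalSpace.proj (F := ℂ) (E := E))) (hl : e.IsLinear ℂ)
    (hQa : ∀ x ∈ U, Q (x, a x) ∈ e.baseSet) (hQb : ∀ x ∈ U, Q (x, b x) ∈ e.baseSet)
    (h : NVSect E fun x => Q (x, a x)) : NVSect E fun x => Q (x, b x) := by
  haveI := hl
  classical
  obtain ⟨v, hvc, hvnz⟩ := h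
  have habU : ∀ x, x ∉ U → a x = b x := fun x hx => hab x fun hc => hx (hCU hc)
  refine ⟨fun x => if hx : x ∈ U then e.symm (Q (x, b x)) ((e ⟨Q (x, a x), v x⟩).2)
      else cast (congrArg E (congrArg (fun t => Q (x, t)) (habU x hx))) (v x), ?_, ?_⟩
  · -- continuity
    have hcoord : ContinuousOn (fun x => (e (⟨Q (x, a x), v x⟩ : TotalSpace ℂ E)).2) U := by
      have h1 : ContinuousOn (fun x => e (⟨Q (x, a x), v x⟩ : TotalSpace ℂ E)) U :=
        e.continuousOn.comp hvc.continuousOn fun x hx => e.mem_source.2 (hQa x hx)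
      exact continuous_snd.comp_continuousOn h1
    have hF₁ : ContinuousOn (fun x => (⟨Q (x, b x),
        e.symm (Q (x, b x)) ((e ⟨Q (x, a x), v x⟩).2)⟩ : TotalSpace ℂ E)) U := by
      have hinner : ContinuousOn
          (fun x => ((Q (x, b x), (e (⟨Q (x, a x), v x⟩ : TotalSpace ℂ E)).2) : B × ℂ)) U :=
        ((hQ.comp (continuous_id.prodMk hb)).continuousOn).prodMk hcoord
      exact e.continuousOn_symm.comp hinner fun x hx => ⟨hQb x hx, trivial⟩
    rw [continuous_iff_continuousAt]
    intro x₀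
    by_cases hx₀ : x₀ ∈ U
    · refine (hF₁.continuousAt (hUo.mem_nhds hx₀)).congr ?_
      refine Filter.eventuallyEq_of_mem (hUo.mem_nhds hx₀) fun x hx => ?_
      simp only [dif_pos hx]
    · have hx₀C : x₀ ∉ C := fun hc => hx₀ (hCU hc)
      refine hvc.continuousAt.congr ?_
      refine Filter.eventuallyEq_of_mem (hCc.isOpen_compl.mem_nhds hx₀C) fun x hx => ?_
      by_cases hxU : x ∈ U
      · have hx' : a x = b x := hab x hx
        simp only [dif_pos hxU]
        rw [← hx']
        rw [e.symm_apply_apply_mk (hQa x hxU)]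
      · simp only [dif_neg hxU]
        exact (TotalSpace.mk_cast'' (congrArg (fun t => Q (x, t)) (habU x hxU)) (v x)).symm
  · intro x
    by_cases hx : x ∈ U
    · simp only [dif_pos hx]
      have h1 : (e (⟨Q (x, a x), v x⟩ : TotalSpace ℂ E)).2 ≠ 0 := by
        have h2 := (e.linearEquivAt ℂ (Q (x, a x)) (hQa x hx)).map_ne_zero_iff (x := v x)
        simpa using h2.2 (hvnz x)
      have h2 := ((e.linearEquivAt ℂ (Q (x, b x)) (hQb x hx)).symm.map_ne_zero_iff
        (x := (e (⟨Q (x, a x), v x⟩ : TotalSpace ℂ E)).2))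
      simpa using h2.2 h1
    · simp only [dif_neg hx]
      exact (cast_ne_zero'' (congrArg (fun t => Q (x, t)) (habU x hx))).2 (hvnz x)

end BundleAux

section BundleAux2

variable {B : Type*} [TopologicalSpace B] {X : Type*} [TopologicalSpace X]
variable {E : B → Type*} [TopologicalSpace (TotalSpace ℂ E)] [∀ b, AddCommGroup (E b)]
  [∀ b, Module ℂ (E b)] [∀ b, TopologicalSpace (E b)] [FiberBundle ℂ E] [VectorBundle ℂ ℂ E]

theorem exists_tube {Q : X × ℝ → B} (hQ : Continuous Q) (x : X) :
    ∃ (U : Set X) (δ : ℝ), IsOpen U ∧ x ∈ U ∧ 0 < δ ∧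
      ∀ t ∈ Set.Icc (0:ℝ) 1, ∃ e : Trivialization ℂ (Bundle.TotalSpace.proj (F := ℂ) (E := E)),
        e.IsLinear ℂ ∧ ∀ y ∈ U, ∀ s : ℝ, |s - t| ≤ δ → Q (y, s) ∈ e.baseSet := by
  have key : ∀ t : ℝ, ∃ (e : Trivialization ℂ (Bundle.TotalSpace.proj (F := ℂ) (E := E)))
      (V : Set X) (ε : ℝ), e.IsLinear ℂ ∧ IsOpen V ∧ x ∈ V ∧ 0 < ε ∧
      ∀ y ∈ V, ∀ s : ℝ, |s - t| < 3 * ε → Q (y, s) ∈ e.baseSet := by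
    intro t
    set e := trivializationAt ℂ E (Q (x, t)) with he
    have hb : Q (x, t) ∈ e.baseSet := FiberBundle.mem_baseSet_trivializationAt ℂ E _
    have hW : Q ⁻¹' e.baseSet ∈ nhds (x, t) := (e.open_baseSet.preimage hQ).mem_nhds hb
    rw [mem_nhds_prod_iff] at hW
    obtain ⟨u, hu, w, hw, huw⟩ := hW
    obtain ⟨ε, hε, hball⟩ := Metric.mem_nhds_iff.1 hw
    obtain ⟨u', hu'sub, hu'o, hxu'⟩ := mem_nhds_iff.1 hu
    refine ⟨e, u', ε/3, inferInstance, hu'o, hxu', by positivity, ?_⟩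
    intro y hy s hs
    refine huw ⟨hu'sub hy, hball ?_⟩
    rw [Metric.mem_ball, Real.dist_eq]
    linarith [hs]
  choose e V ε hlin hVo hxV hε hP using key
  obtain ⟨sf, hsf⟩ := isCompact_Icc.elim_finite_subcover (fun t : ℝ => Metric.ball t (ε t))
    (fun t => Metric.isOpen_ball)
    (fun t ht => Set.mem_iUnion.2 ⟨t, Metric.mem_ball_self (hε t)⟩)
  have hsfne : sf.Nonempty := by
    rcases Set.mem_iUnion₂.1 (hsf (Set.mem_Icc.2 ⟨le_refl 0, zero_le_one⟩)) with ⟨t₀, ht₀, -⟩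
    exact ⟨t₀, ht₀⟩
  refine ⟨⋂ t ∈ sf, V t, sf.inf' hsfne ε, isOpen_biInter_finset (fun t _ => hVo t),
    Set.mem_iInter₂.2 fun t _ => hxV t, ?_, ?_⟩
  · exact (Finset.lt_inf'_iff _).2 fun t _ => hε t
  · intro t ht
    obtain ⟨t₀, ht₀s, ht₀⟩ := Set.mem_iUnion₂.1 (hsf ht)
    refine ⟨e t₀, hlin t₀, fun y hy s' hs' => ?_⟩
    refine hP t₀ y (Set.mem_iInter₂.1 hy t₀ ht₀s) s' ?_
    have h1 : |t - t₀| < ε t₀ := by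
      have := Metric.mem_ball.1 ht₀; rwa [Real.dist_eq] at this
    have h2 : sf.inf' hsfne ε ≤ ε t₀ := Finset.inf'_le _ ht₀s
    have h3 : |s' - t₀| ≤ |s' - t| + |t - t₀| := abs_sub_le _ _ _
    have := hε t₀
    linarith

theorem NVSect.isTrivialLineBundle {g : X → B} (hg : Continuous g) (h : NVSect E g) :
    IsTrivialLineBundle (g *ᵖ E) := by
  obtain ⟨v, hvc, hvnz⟩ := h
  classical
  have span : ∀ (x : X) (w : E (g x)) (e : Trivialization ℂ
      (Bundle.TotalSpace.proj (F := ℂ) (E := E))) (he : e.IsLinear ℂ) (hbx : g x ∈ e.baseSet),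
      w = ((e ⟨g x, w⟩).2 / (e ⟨g x, v x⟩).2) • v x := by
    intro x w e he hbx
    haveI := he
    have hLv : (e.linearEquivAt ℂ (g x) hbx) (v x) ≠ 0 :=
      (e.linearEquivAt ℂ (g x) hbx).map_ne_zero_iff.2 (hvnz x)
    apply (e.linearEquivAt ℂ (g x) hbx).injective
    rw [map_smul]
    show (e ⟨g x, w⟩).2 = ((e ⟨g x, w⟩).2 / (e ⟨g x, v x⟩).2) • (e ⟨g x, v x⟩).2
    rw [smul_eq_mul, div_mul_cancel₀]
    exact hLv
  have ratio : ∀ (x : X) (w : E (g x)) (e e' : Trivialization ℂ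
      (Bundle.TotalSpace.proj (F := ℂ) (E := E))) (he : e.IsLinear ℂ) (he' : e'.IsLinear ℂ)
      (hb : g x ∈ e.baseSet) (hb' : g x ∈ e'.baseSet),
      (e ⟨g x, w⟩).2 / (e ⟨g x, v x⟩).2 = (e' ⟨g x, w⟩).2 / (e' ⟨g x, v x⟩).2 := by
    intro x w e e' he he' hb hb'
    haveI := he; haveI := he'
    have hv' : (e' ⟨g x, v x⟩).2 ≠ 0 :=
      (e'.linearEquivAt ℂ (g x) hb').map_ne_zero_iff.2 (hvnz x)
    have h2 : (e' ⟨g x, w⟩).2 = ((e ⟨g x, w⟩).2 / (e ⟨g x, v x⟩).2) * (e' ⟨g x, v x⟩).2 := by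
      conv_lhs => rw [span x w e he hb]
      have h3 := (e'.linearEquivAt ℂ (g x) hb').map_smul
        ((e ⟨g x, w⟩).2 / (e ⟨g x, v x⟩).2) (v x)
      rw [smul_eq_mul] at h3
      exact h3
    rw [h2, mul_div_cancel_right₀ _ hv']
  set c : TotalSpace ℂ (g *ᵖ E) → ℂ := fun p =>
    (trivializationAt ℂ E (g p.proj) ⟨g p.proj, p.snd⟩).2 /
      (trivializationAt ℂ E (g p.proj) ⟨g p.proj, v p.proj⟩).2 with hcdef
  have hcc : Continuous c := by
    rw [continuous_iff_continuousAt]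
    intro p₀
    set e := trivializationAt ℂ E (g p₀.proj) with hedef
    have hb₀ : g p₀.proj ∈ e.baseSet := FiberBundle.mem_baseSet_trivializationAt ℂ E _
    set O : Set (TotalSpace ℂ (g *ᵖ E)) :=
      (Bundle.TotalSpace.proj (F := ℂ) (E := g *ᵖ E)) ⁻¹' (g ⁻¹' e.baseSet) with hOdef
    have hOopen : IsOpen O := (e.open_baseSet.preimage hg).preimage (Pullback.continuous_proj ℂ E g)
    have hp₀ : p₀ ∈ O := hb₀
    have heq : Set.EqOn (fun p : TotalSpace ℂ (g *ᵖ E) =>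
        (e (⟨g p.proj, p.snd⟩ : TotalSpace ℂ E)).2 /
        (e (⟨g p.proj, v p.proj⟩ : TotalSpace ℂ E)).2) c O := by
      intro p hp
      exact (ratio p.proj p.snd (trivializationAt ℂ E (g p.proj)) e inferInstance inferInstance
        (FiberBundle.mem_baseSet_trivializationAt ℂ E _) hp).symm
    have hcont : ContinuousOn (fun p : TotalSpace ℂ (g *ᵖ E) =>
        (e (⟨g p.proj, p.snd⟩ : TotalSpace ℂ E)).2 /
        (e (⟨g p.proj, v p.proj⟩ : TotalSpace ℂ E)).2) O := by
      have hlift : Continuous fun p : TotalSpace ℂ (g *ᵖ E) =>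
          (⟨g p.proj, p.snd⟩ : TotalSpace ℂ E) := Pullback.continuous_lift ℂ E g
      have hnum : ContinuousOn (fun p : TotalSpace ℂ (g *ᵖ E) =>
          (e (⟨g p.proj, p.snd⟩ : TotalSpace ℂ E)).2) O :=
        continuous_snd.comp_continuousOn (e.continuousOn.comp hlift.continuousOn
          fun p hp => e.mem_source.2 hp)
      have hden : ContinuousOn (fun p : TotalSpace ℂ (g *ᵖ E) =>
          (e (⟨g p.proj, v p.proj⟩ : TotalSpace ℂ E)).2) O :=
        continuous_snd.comp_continuousOn (e.continuousOn.comp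
          ((hvc.comp (Pullback.continuous_proj ℂ E g)).continuousOn)
          fun p hp => e.mem_source.2 hp)
      exact hnum.div hden fun p hp =>
        (e.linearEquivAt ℂ (g p.proj) hp).map_ne_zero_iff.2 (hvnz _)
    exact (hcont.continuousAt (hOopen.mem_nhds hp₀)).congr
      (Filter.eventuallyEq_of_mem (hOopen.mem_nhds hp₀) heq)
  have hinv : Continuous (fun q : X × ℂ =>
      (⟨q.1, (q.2 • v q.1 : E (g q.1))⟩ : TotalSpace ℂ (g *ᵖ E))) := by
    rw [(inducing_pullbackTotalSpaceEmbedding ℂ E g).continuous_iff]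
    refine continuous_fst.prodMk ?_
    show Continuous fun q : X × ℂ => (⟨g q.1, (q.2 • v q.1 : E (g q.1))⟩ : TotalSpace ℂ E)
    rw [continuous_iff_continuousAt]
    intro q₀
    set e := trivializationAt ℂ E (g q₀.1) with hedef
    have hb₀ : g q₀.1 ∈ e.baseSet := FiberBundle.mem_baseSet_trivializationAt ℂ E _
    set O : Set (X × ℂ) := (fun q : X × ℂ => q.1) ⁻¹' (g ⁻¹' e.baseSet) with hOdef
    have hOopen : IsOpen O := (e.open_baseSet.preimage hg).preimage continuous_fst
    have hq₀ : q₀ ∈ O := hb₀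
    have hGcont : ContinuousOn (fun q : X × ℂ =>
        (⟨(g q.1 : B), e.symm (g q.1) (q.2 * (e (⟨g q.1, v q.1⟩ : TotalSpace ℂ E)).2)⟩ :
          TotalSpace ℂ E)) O := by
      have hcv : ContinuousOn (fun q : X × ℂ =>
          (e (⟨g q.1, v q.1⟩ : TotalSpace ℂ E)).2) O :=
        continuous_snd.comp_continuousOn (e.continuousOn.comp
          ((hvc.comp continuous_fst).continuousOn) fun q hq => e.mem_source.2 hq)
      have hinner : ContinuousOn (fun q : X × ℂ =>
          ((g q.1, q.2 * (e (⟨g q.1, v q.1⟩ : TotalSpace ℂ E)).2) : B × ℂ)) O :=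
        ((hg.comp continuous_fst).continuousOn).prodMk (continuous_snd.continuousOn.mul hcv)
      exact e.continuousOn_symm.comp hinner fun q hq => ⟨hq, trivial⟩
    refine (hGcont.continuousAt (hOopen.mem_nhds hq₀)).congr ?_
    refine Filter.eventuallyEq_of_mem (hOopen.mem_nhds hq₀) fun q hq => ?_
    have hbq : g q.1 ∈ e.baseSet := hq
    have h1 : e.symm (g q.1) (q.2 * (e (⟨g q.1, v q.1⟩ : TotalSpace ℂ E)).2) = q.2 • v q.1 := by
      have h2 : ((e.linearEquivAt ℂ (g q.1) hbq).symm)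
          (q.2 * (e.linearEquivAt ℂ (g q.1) hbq) (v q.1)) = q.2 • v q.1 := by
        rw [← smul_eq_mul, map_smul, LinearEquiv.symm_apply_apply]
      simpa using h2
    rw [h1]
  refine ⟨{ toFun := fun p => (p.proj, c p)
            invFun := fun q => ⟨q.1, (q.2 • v q.1 : E (g q.1))⟩
            source := Set.univ
            target := Set.univ
            map_source' := fun _ _ => trivial
            map_target' := fun _ _ => trivial
            left_inv' := ?_
            right_inv' := ?_
            open_source := isOpen_univ
            open_target := isOpen_univ
            continuousOn_toFun := ((Pullback.continuous_proj ℂ E g).prodMk hcc).continuousOn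
            continuousOn_invFun := hinv.continuousOn
            baseSet := Set.univ
            open_baseSet := isOpen_univ
            source_eq := by simp
            target_eq := (Set.univ_prod_univ).symm
            proj_toFun := fun _ _ => rfl }, rfl, ?_⟩
  · rintro p -
    have h1 : (c p • v p.proj : E (g p.proj)) = p.snd :=
      (span p.proj p.snd (trivializationAt ℂ E (g p.proj)) inferInstance
        (FiberBundle.mem_baseSet_trivializationAt ℂ E _)).symm
    exact congrArg (fun w : E (g p.proj) => (⟨p.proj, w⟩ : TotalSpace ℂ (g *ᵖ E))) h1
  · rintro ⟨x, z⟩ -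
    have hbx : g x ∈ (trivializationAt ℂ E (g x)).baseSet :=
      FiberBundle.mem_baseSet_trivializationAt ℂ E _
    have h1 : c ⟨x, (z • v x : E (g x))⟩ = z := by
      have h2 := ((trivializationAt ℂ E (g x)).linearEquivAt ℂ (g x) hbx).map_smul z (v x)
      have h3 : ((trivializationAt ℂ E (g x)) ⟨g x, (z • v x : E (g x))⟩).2
          = z * ((trivializationAt ℂ E (g x)) ⟨g x, v x⟩).2 := by
        rw [smul_eq_mul] at h2; exact h2
      have h4 : ((trivializationAt ℂ E (g x)) ⟨g x, v x⟩).2 ≠ 0 :=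
        ((trivializationAt ℂ E (g x)).linearEquivAt ℂ (g x) hbx).map_ne_zero_iff.2 (hvnz x)
      show ((trivializationAt ℂ E (g x)) ⟨g x, (z • v x : E (g x))⟩).2
          / ((trivializationAt ℂ E (g x)) ⟨g x, v x⟩).2 = z
      rw [h3, mul_div_cancel_right₀ _ h4]
    exact congrArg (Prod.mk x) h1
  · refine ⟨fun x _ => ?_⟩
    have hbx : g x ∈ (trivializationAt ℂ E (g x)).baseSet :=
      FiberBundle.mem_baseSet_trivializationAt ℂ E _
    have hd : ((trivializationAt ℂ E (g x)) ⟨g x, v x⟩).2 ≠ 0 :=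
      ((trivializationAt ℂ E (g x)).linearEquivAt ℂ (g x) hbx).map_ne_zero_iff.2 (hvnz x)
    constructor
    · intro w w'
      show c ⟨x, w + w'⟩ = c ⟨x, w⟩ + c ⟨x, w'⟩
      have h2 := ((trivializationAt ℂ E (g x)).linearEquivAt ℂ (g x) hbx).map_add w w'
      have h3 : ((trivializationAt ℂ E (g x)) ⟨g x, w + w'⟩).2
          = ((trivializationAt ℂ E (g x)) ⟨g x, w⟩).2
            + ((trivializationAt ℂ E (g x)) ⟨g x, w'⟩).2 := h2
      show ((trivializationAt ℂ E (g x)) ⟨g x, w + w'⟩).2 / _ = _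
      rw [h3, add_div]
    · intro r w
      show c ⟨x, r • w⟩ = r • c ⟨x, w⟩
      have h2 := ((trivializationAt ℂ E (g x)).linearEquivAt ℂ (g x) hbx).map_smul r w
      have h3 : ((trivializationAt ℂ E (g x)) ⟨g x, r • w⟩).2
          = r * ((trivializationAt ℂ E (g x)) ⟨g x, w⟩).2 := by
        rw [smul_eq_mul] at h2; exact h2
      show ((trivializationAt ℂ E (g x)) ⟨g x, r • w⟩).2 / _ = _
      rw [h3, smul_eq_mul, mul_div_assoc]

end BundleAux2

/-- For any compact Hausdorff space `X` and continuous map `f : X → F̂_*`, the pullback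
`f*(L_Q)` of the Quillen determinant line bundle is trivial.  Here `E` is the Quillen
determinant line bundle over `F₀` (a line bundle whose fiber at `T` is
`Λ^top Ker(T)* ⊗ Λ^top Coker(T)`), and the pullback along `f` is expressed through any
(necessarily unique) continuous lift `g : X → F₀` of `f` through the inclusion
`F̂_* ↪ F₀`. -/
theorem pullback_quillen_trivial_on_FStar
    [TopologicalSpace.SeparableSpace H]
    {X : Type*} [TopologicalSpace X] [CompactSpace X] [T2Space X]
    (E : {T : H →L[ℂ] H // IsFredholm T ∧ HasIndexZero T} → Type)
    [TopologicalSpace (TotalSpace ℂ E)] [∀ T, AddCommGroup (E T)] [∀ T, Module ℂ (E T)]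
    [∀ T, TopologicalSpace (E T)] [FiberBundle ℂ E] [VectorBundle ℂ ℂ E]
    (hfiber : ∀ T, Nonempty (E T ≃ₗ[ℂ] QuillenFiber T))
    (f : X → {T : H →L[ℂ] H // MemFStar T}) (hf : Continuous f)
    (g : X → {T : H →L[ℂ] H // IsFredholm T ∧ HasIndexZero T})
    (hg : Continuous g) (hgf : ∀ x, (g x).1 = (f x).1) :
    IsTrivialLineBundle (g *ᵖ E) := by
  classical
  rcases isEmpty_or_nonempty X with hX | hX
  · refine NVSect.isTrivialLineBundle hg ⟨fun x => isEmptyElim x, ?_, fun x => isEmptyElim x⟩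
    exact continuous_iff_continuousAt.2 fun x => isEmptyElim x
  have hmem : ∀ (x : X) (t : ℝ), IsFredholm (Qop (f x).1 t) ∧ HasIndexZero (Qop (f x).1 t) := by
    intro x t
    by_cases ht0 : t = 0
    · subst ht0
      rw [Qop_zero, ← hgf x]
      exact (g x).2
    by_cases ht1 : t = 1
    · subst ht1
      rw [Qop_one]
      exact isFredholm_hasIndexZero_of_isUnit isUnit_one
    · exact isFredholm_hasIndexZero_of_isUnit (isUnit_Qop (f x).2.1 ht0 ht1)
  set Q : X × ℝ → {T : H →L[ℂ] H // IsFredholm T ∧ HasIndexZero T} :=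
    fun p => ⟨Qop (f p.1).1 p.2, hmem p.1 p.2⟩ with hQdef
  have hQc : Continuous Q := by
    refine Continuous.subtype_mk ?_ _
    show Continuous fun p : X × ℝ =>
      (1 - ((p.2 : ℝ) : ℂ)) • (f p.1).1 + (((p.2 : ℝ) : ℂ)
        + Complex.I * ((p.2 : ℝ) : ℂ) * (1 - ((p.2 : ℝ) : ℂ))) • (1 : H →L[ℂ] H)
    have hT : Continuous fun p : X × ℝ => ((f p.1).1 : H →L[ℂ] H) :=
      continuous_subtype_val.comp (hf.comp continuous_fst)
    have hcast : Continuous fun p : X × ℝ => ((p.2 : ℝ) : ℂ) :=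
      Complex.continuous_ofReal.comp continuous_snd
    exact ((continuous_const.sub hcast).smul hT).add
      ((hcast.add ((continuous_const.mul hcast).mul (continuous_const.sub hcast))).smul
        continuous_const)
  choose U δ hUo hxU hδ htube using fun x : X => exists_tube (E := E) hQc x
  obtain ⟨sf, hsf⟩ := isCompact_univ.elim_finite_subcover U hUo
    (fun x _ => Set.mem_iUnion.2 ⟨x, hxU x⟩)
  obtain ⟨x₀⟩ := hX
  have hsfne : sf.Nonempty := by
    rcases Set.mem_iUnion₂.1 (hsf (Set.mem_univ x₀)) with ⟨y, hy, -⟩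
    exact ⟨y, hy⟩
  set δ₀ : ℝ := sf.inf' hsfne δ with hδ₀def
  have hδ₀ : 0 < δ₀ := (Finset.lt_inf'_iff _).2 fun y _ => hδ y
  obtain ⟨N, hN⟩ := exists_nat_gt (1 / (2 * δ₀))
  have hN0 : 0 < (N : ℝ) := lt_trans (by positivity) hN
  have hNne : (N : ℝ) ≠ 0 := ne_of_gt hN0
  have hNδ : 1 / (2 * N) ≤ δ₀ := by
    rw [div_le_iff₀ (by positivity)]
    rw [div_lt_iff₀ (by positivity)] at hN
    nlinarith
  have h2Npos : 0 < 1 / (2 * (N:ℝ)) := by positivity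
  have hhalf : (1:ℝ) / N = 1 / (2 * N) + 1 / (2 * N) := by
    field_simp
    ring
  have hcov : (Set.univ : Set X) ⊆ ⋃ i : {y : X // y ∈ sf}, U i.1 := by
    intro x _
    rcases Set.mem_iUnion₂.1 (hsf (Set.mem_univ x)) with ⟨y, hy, hxy⟩
    exact Set.mem_iUnion.2 ⟨⟨y, hy⟩, hxy⟩
  obtain ⟨ρ, hρ⟩ := PartitionOfUnity.exists_isSubordinate (s := (Set.univ : Set X))
    isClosed_univ (fun i : {y : X // y ∈ sf} => U i.1) (fun i => hUo i.1) hcov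
  set m := Fintype.card {y : X // y ∈ sf} with hm
  set σ : Fin m ≃ {y : X // y ∈ sf} := (Fintype.equivFin _).symm with hσ
  set φ : ℕ → X → ℝ := fun n x => if h : n < m then ρ (σ ⟨n, h⟩) x else 0 with hφ
  set ψ : ℕ → X → ℝ := fun n x => ∑ i ∈ Finset.range n, φ i x with hψ
  have hφc : ∀ n, Continuous (φ n) := by
    intro n
    by_cases h : n < m
    · have : φ n = fun x => ρ (σ ⟨n, h⟩) x := by funext x; simp [hφ, h]
      rw [this]; exact (ρ (σ ⟨n, h⟩)).continuous
    · have : φ n = fun _ => 0 := by funext x; simp [hφ, h]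
      rw [this]; exact continuous_const
  have hφ0 : ∀ n x, 0 ≤ φ n x := by
    intro n x
    by_cases h : n < m
    · simp only [hφ, dif_pos h]; exact ρ.nonneg _ _
    · simp only [hφ, dif_neg h]; exact le_refl 0
  have hψc : ∀ n, Continuous (ψ n) := fun n => continuous_finset_sum _ fun i _ => hφc i
  have hψ0 : ∀ n x, 0 ≤ ψ n x := fun n x => Finset.sum_nonneg fun i _ => hφ0 i x
  have hψm : ∀ x, ψ m x = 1 := by
    intro x
    have h1 : ∑ᶠ i, ρ i x = 1 := ρ.sum_eq_one (Set.mem_univ x)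
    rw [finsum_eq_sum_of_fintype] at h1
    calc ψ m x = ∑ i ∈ Finset.range m, φ i x := rfl
    _ = ∑ i : Fin m, φ i x := (Fin.sum_univ_eq_sum_range (fun i => φ i x) m).symm
    _ = ∑ i : Fin m, ρ (σ i) x := by
        refine Finset.sum_congr rfl fun i _ => ?_
        simp only [hφ, dif_pos i.isLt, Fin.eta]
    _ = ∑ j : {y // y ∈ sf}, ρ j x := Equiv.sum_comp σ (fun j => ρ j x)
    _ = 1 := h1
  have hψle : ∀ n, n ≤ m → ∀ x, ψ n x ≤ 1 := by
    intro n hn x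
    rw [← hψm x]
    exact Finset.sum_le_sum_of_subset_of_nonneg (Finset.range_subset_range.2 hn)
      fun i _ _ => hφ0 i x
  set lvl : ℕ → ℕ → X → ℝ := fun k n x => ((N : ℝ) - k) / N - ψ n x / N with hlvl
  have hlvlc : ∀ k n, Continuous (lvl k n) :=
    fun k n => continuous_const.sub ((hψc n).div_const _)
  have inner : ∀ k, k < N → ∀ n, n ≤ m →
      NVSect E (fun x => Q (x, lvl k 0 x)) → NVSect E (fun x => Q (x, lvl k n x)) := by
    intro k hk n
    induction n with
    | zero => exact fun _ h => h
    | succ n ih =>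
      intro hn h
      have hnm : n < m := hn
      have h' := ih (Nat.le_of_succ_le hn) h
      have hk1 : (k : ℝ) + 1 ≤ N := by exact_mod_cast hk
      have hdivle : ((N : ℝ) - k) / N ≤ 1 := by
        rw [div_le_one hN0]
        have : (0:ℝ) ≤ k := Nat.cast_nonneg k
        linarith
      have hdivge : 1 / (N:ℝ) ≤ ((N : ℝ) - k) / N := by
        refine (div_le_div_iff_of_pos_right hN0).2 ?_
        linarith
      have ht₀mem : ((N:ℝ) - k) / N - 1 / (2 * N) ∈ Set.Icc (0:ℝ) 1 := by
        constructor
        · rw [hhalf] at hdivge; linarith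
        · linarith
      obtain ⟨e, hel, he⟩ := htube (σ ⟨n, hnm⟩).1 (((N:ℝ) - k) / N - 1 / (2 * N)) ht₀mem
      have hδle : δ₀ ≤ δ (σ ⟨n, hnm⟩).1 := Finset.inf'_le _ (σ ⟨n, hnm⟩).2
      have habs : ∀ x (j : ℕ), j ≤ m →
          |lvl k j x - (((N:ℝ) - k) / N - 1 / (2 * N))| ≤ δ (σ ⟨n, hnm⟩).1 := by
        intro x j hj
        have h1 : 0 ≤ ψ j x := hψ0 j x
        have h2 : ψ j x ≤ 1 := hψle j hj x
        have heq2 : lvl k j x - (((N:ℝ) - k) / N - 1 / (2 * N))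
            = 1 / (2 * N) - ψ j x / N := by
          simp only [hlvl]; ring
        have h3 : ψ j x / N ≤ 1 / N := by
          exact (div_le_div_iff_of_pos_right hN0).2 h2
        have h4 : 0 ≤ ψ j x / N := div_nonneg h1 (le_of_lt hN0)
        rw [heq2, abs_le]
        refine ⟨?_, ?_⟩ <;> rw [hhalf] at h3 <;> linarith
      refine NVSect.step hQc (hlvlc k n) (hlvlc k (n+1)) (hUo (σ ⟨n, hnm⟩).1)
        (isClosed_tsupport _) (hρ (σ ⟨n, hnm⟩)) ?_ e hel
        (fun x hx => he x hx _ (habs x n (le_of_lt hnm)))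
        (fun x hx => he x hx _ (habs x (n+1) hn)) h'
      intro x hx
      have hz : φ n x = 0 := by
        simp only [hφ, dif_pos hnm]
        exact image_eq_zero_of_notMem_tsupport hx
      simp only [hlvl, hψ, Finset.sum_range_succ, hz, add_zero]
  have outer : ∀ k, k ≤ N → NVSect E (fun x => Q (x, lvl k 0 x)) := by
    intro k
    induction k with
    | zero =>
      intro _
      have hbase : NVSect E (fun _ : X =>
          (⟨1, isFredholm_hasIndexZero_of_isUnit isUnit_one⟩ :
            {T : H →L[ℂ] H // IsFredholm T ∧ HasIndexZero T})) := by
        set b₁ : {T : H →L[ℂ] H // IsFredholm T ∧ HasIndexZero T} :=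
          ⟨1, isFredholm_hasIndexZero_of_isUnit isUnit_one⟩ with hb₁
        have hbb : b₁ ∈ (trivializationAt ℂ E b₁).baseSet :=
          FiberBundle.mem_baseSet_trivializationAt ℂ E _
        refine ⟨fun _ => (trivializationAt ℂ E b₁).symm b₁ 1, continuous_const, fun _ => ?_⟩
        have h2 := (((trivializationAt ℂ E b₁).linearEquivAt ℂ b₁ hbb).symm.map_ne_zero_iff
          (x := (1:ℂ)))
        simpa using h2.2 one_ne_zero
      refine hbase.congr fun x => ?_
      have hψ00 : ψ 0 x = 0 := by simp [hψ]
      have hl1 : lvl 0 0 x = 1 := by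
        simp only [hlvl, hψ00]
        rw [Nat.cast_zero, sub_zero, zero_div, sub_zero, div_self hNne]
      refine Subtype.ext ?_
      show (1 : H →L[ℂ] H) = Qop (f x).1 (lvl 0 0 x)
      rw [hl1, Qop_one]
    | succ k ih =>
      intro hk
      have h1 := ih (Nat.le_of_succ_le hk)
      have h2 := inner k (Nat.lt_of_succ_le hk) m le_rfl h1
      refine h2.congr fun x => ?_
      have heq3 : lvl k m x = lvl (k+1) 0 x := by
        have hψ00 : ψ 0 x = 0 := by simp [hψ]
        simp only [hlvl, hψm x, hψ00]
        push_cast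
        field_simp
        ring
      rw [heq3]
  have hfin := outer N le_rfl
  have hgsect : NVSect E g := by
    refine hfin.congr fun x => ?_
    have hl0 : lvl N 0 x = 0 := by
      have hψ00 : ψ 0 x = 0 := by simp [hψ]
      simp [hlvl, hψ00]
    refine Subtype.ext ?_
    show Qop (f x).1 (lvl N 0 x) = (g x).1
    rw [hl0, Qop_zero, hgf x]
  exact NVSect.isTrivialLineBundle hg hgsect
end
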